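/- Let (u₂, v₂) solve the planar Lotka–Volterra competition ODE system u' = u(a₁ − b₁u − c₁v), v' = v(a₂ − b₂u − c₂v) with positive parameters satisfying a₁/a₂ > max{b₁/b₂, c₁/c₂} and positive initial data. Then (u₂(t), v₂(t)) → (a₁/b₁, 0) as t → ∞. -/

import Mathlib

open Real Set Filter Topology


lemma stay_above (f f' : ℝ → ℝ) (T c : ℝ)
    (hf : ∀ t, T ≤ t → HasDerivAt f (f' t) t)
    (hpos : ∀ t, T ≤ t → f t < c → 0 < f' t)
    (t₁ t₂ : ℝ) (hT : T ≤ t₁) (h12 : t₁ ≤ t₂) (h1 : c ≤ f t₁) :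
    c ≤ f t₂ := by
  by_contra hlt
  push_neg at hlt
  have hcont : ContinuousOn f (Icc t₁ t₂) := fun x hx =>
    ((hf x (hT.trans hx.1)).continuousAt).continuousWithinAt
  set S : Set ℝ := Icc t₁ t₂ ∩ f ⁻¹' (Ici c) with hS
  have hSclosed : IsClosed S := hcont.preimage_isClosed_of_isClosed isClosed_Icc isClosed_Ici
  have hSne : S.Nonempty := ⟨t₁, ⟨le_refl _, h12⟩, h1⟩
  have hSbdd : BddAbove S := ⟨t₂, fun x hx => hx.1.2⟩
  have hsmem : sSup S ∈ S := hSclosed.csSup_mem hSne hSbdd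
  set s := sSup S with hs
  have hs2 : s ≤ t₂ := hsmem.1.2
  have hs1 : t₁ ≤ s := hsmem.1.1
  have hfs : c ≤ f s := hsmem.2
  have hslt : s < t₂ := by
    rcases hs2.lt_or_eq with h | h
    · exact h
    · exfalso; rw [h] at hfs; linarith
  have hlt' : ∀ x, s < x → x ≤ t₂ → f x < c := by
    intro x hx1 hx2
    by_contra h
    push_neg at h
    have hxS : x ∈ S := ⟨⟨hs1.trans hx1.le, hx2⟩, h⟩
    exact absurd (le_csSup hSbdd hxS) (not_le.mpr hx1)
  have hmono : StrictMonoOn f (Icc s t₂) := by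
    apply strictMonoOn_of_deriv_pos (convex_Icc s t₂)
    · exact fun x hx => ((hf x (hT.trans (hs1.trans hx.1))).continuousAt).continuousWithinAt
    · intro x hx
      rw [interior_Icc] at hx
      rw [(hf x (hT.trans (hs1.trans hx.1.le))).deriv]
      exact hpos x (hT.trans (hs1.trans hx.1.le)) (hlt' x hx.1 hx.2.le)
  have := hmono ⟨le_refl s, hs2⟩ ⟨hslt.le, le_refl t₂⟩ hslt
  linarith

lemma stay_below (f f' : ℝ → ℝ) (T c : ℝ)
    (hf : ∀ t, T ≤ t → HasDerivAt f (f' t) t)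
    (hneg : ∀ t, T ≤ t → c < f t → f' t < 0)
    (t₁ t₂ : ℝ) (hT : T ≤ t₁) (h12 : t₁ ≤ t₂) (h1 : f t₁ ≤ c) :
    f t₂ ≤ c := by
  have := stay_above (fun t => -f t) (fun t => -f' t) T (-c)
    (fun t ht => (hf t ht).neg)
    (fun t ht hlt => by
      have hlt2 : -f t < -c := hlt
      have := hneg t ht (by linarith)
      show 0 < -f' t
      linarith)
    t₁ t₂ hT h12 (by show -c ≤ -f t₁; linarith)
  have h2 : -c ≤ -f t₂ := this
  linarith

lemma must_reach (f f' : ℝ → ℝ) (T c δ : ℝ) (hδ : 0 < δ)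
    (hf : ∀ t, T ≤ t → HasDerivAt f (f' t) t)
    (h : ∀ t, T ≤ t → f t < c → δ ≤ f' t) :
    ∃ t, T ≤ t ∧ c ≤ f t := by
  by_contra hc
  push_neg at hc
  have hd : ∀ t, T ≤ t → HasDerivAt (fun t => f t - δ * t) (f' t - δ) t := by
    intro t ht
    have h := (hf t ht).sub ((hasDerivAt_id t).const_mul δ)
    rw [mul_one] at h
    exact h
  have hmono : MonotoneOn (fun t => f t - δ * t) (Ici T) := by
    apply monotoneOn_of_deriv_nonneg (convex_Ici T)
    · exact fun x hx => ((hd x hx).continuousAt).continuousWithinAt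
    · intro x hx
      rw [interior_Ici] at hx
      exact ((hd x hx.le).differentiableAt).differentiableWithinAt
    · intro x hx
      rw [interior_Ici] at hx
      rw [(hd x hx.le).deriv]
      have := h x hx.le (hc x hx.le)
      linarith
  have hpos : 0 < c - f T := by linarith [hc T le_rfl]
  have hq : 0 ≤ (c - f T) / δ := le_of_lt (div_pos hpos hδ)
  have htT : T ≤ T + (c - f T) / δ := by linarith
  have hm := hmono (self_mem_Ici) (mem_Ici.mpr htT) htT
  have hm2 : f T - δ * T ≤ f (T + (c - f T) / δ) - δ * (T + (c - f T) / δ) := hm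
  have hcalc : δ * ((c - f T) / δ) = c - f T := by field_simp
  have hfin : c ≤ f (T + (c - f T) / δ) := by nlinarith [hm2]
  exact absurd hfin (not_le.mpr (hc _ htT))

lemma must_reach_below (f f' : ℝ → ℝ) (T c δ : ℝ) (hδ : 0 < δ)
    (hf : ∀ t, T ≤ t → HasDerivAt f (f' t) t)
    (h : ∀ t, T ≤ t → c < f t → f' t ≤ -δ) :
    ∃ t, T ≤ t ∧ f t ≤ c := by
  obtain ⟨t, ht, hle⟩ := must_reach (fun t => -f t) (fun t => -f' t) T (-c) δ hδ
    (fun t ht => (hf t ht).neg)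
    (fun t ht hlt => by
      have hlt2 : -f t < -c := hlt
      have := h t ht (by linarith)
      show δ ≤ -f' t
      linarith)
  have h2 : -c ≤ -f t := hle
  exact ⟨t, ht, by linarith⟩

lemma decay_lin (f f' : ℝ → ℝ) (δ : ℝ)
    (hf : ∀ t, 0 ≤ t → HasDerivAt f (f' t) t)
    (h : ∀ t, 0 ≤ t → f' t ≤ -δ) :
    ∀ t, 0 ≤ t → f t ≤ f 0 - δ * t := by
  intro t ht
  have hd : ∀ s, 0 ≤ s → HasDerivAt (fun s => f s + δ * s) (f' s + δ) s := by
    intro s hs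
    have h := (hf s hs).add ((hasDerivAt_id s).const_mul δ)
    rw [mul_one] at h
    exact h
  have hmono : AntitoneOn (fun s => f s + δ * s) (Ici 0) := by
    apply antitoneOn_of_deriv_nonpos (convex_Ici 0)
    · exact fun x hx => ((hd x hx).continuousAt).continuousWithinAt
    · intro x hx
      rw [interior_Ici] at hx
      exact ((hd x hx.le).differentiableAt).differentiableWithinAt
    · intro x hx
      rw [interior_Ici] at hx
      rw [(hd x hx.le).deriv]
      have := h x hx.le
      linarith
  have := hmono (self_mem_Ici) (mem_Ici.mpr ht) ht
  simp only [mul_zero, add_zero] at this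
  linarith

lemma pos_of_pos_init (f g : ℝ → ℝ)
    (hf : ∀ t, 0 ≤ t → HasDerivAt f (f t * g t) t)
    (hg : ∀ t, 0 ≤ t → ContinuousAt g t)
    (h0 : 0 < f 0) : ∀ t, 0 ≤ t → 0 < f t := by
  have hne : ∀ t, 0 ≤ t → f t ≠ 0 := by
    intro t₀ ht₀ hft₀
    -- bound |g| on [0, t₀]
    have hgc : ContinuousOn g (Icc 0 t₀) := fun x hx => (hg x hx.1).continuousWithinAt
    obtain ⟨C, hC⟩ := (isCompact_Icc : IsCompact (Icc 0 t₀)).exists_bound_of_continuousOn hgc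
    -- reversed function
    set F : ℝ → ℝ := fun s => f (t₀ - s) with hF
    have hmem : ∀ s ∈ Icc (0:ℝ) t₀, t₀ - s ∈ Icc 0 t₀ := by
      intro s hs; constructor <;> [linarith [hs.2]; linarith [hs.1]]
    have hFd : ∀ s ∈ Icc (0:ℝ) t₀, HasDerivAt F (-(f (t₀ - s) * g (t₀ - s))) s := by
      intro s hs
      have hin : HasDerivAt (fun x : ℝ => t₀ - x) (-1) s := (hasDerivAt_id s).const_sub t₀
      have := (hf (t₀ - s) (hmem s hs).1).comp s hin
      rw [mul_neg_one] at this
      exact this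
    have hFc : ContinuousOn F (Icc 0 t₀) := fun x hx =>
      ((hFd x hx).continuousAt).continuousWithinAt
    have key := norm_le_gronwallBound_of_norm_deriv_right_le (f := F)
      (f' := fun s => -(f (t₀ - s) * g (t₀ - s))) (δ := 0) (K := C) (ε := 0) (a := 0) (b := t₀)
      hFc (fun x hx => (hFd x (Ico_subset_Icc_self hx)).hasDerivWithinAt)
      (by simp [hF, hft₀])
      (by
        intro x hx
        have hgb := hC (t₀ - x) (hmem x (Ico_subset_Icc_self hx))
        have : ‖-(f (t₀ - x) * g (t₀ - x))‖ = ‖f (t₀ - x)‖ * ‖g (t₀ - x)‖ := by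
          rw [norm_neg, norm_mul]
        rw [this, add_zero]
        have h1 : ‖f (t₀ - x)‖ * ‖g (t₀ - x)‖ ≤ ‖f (t₀ - x)‖ * C :=
          mul_le_mul_of_nonneg_left hgb (norm_nonneg _)
        have h2 : ‖F x‖ = ‖f (t₀ - x)‖ := rfl
        rw [h2, mul_comm C]
        exact h1)
    have ht₀pos : 0 < t₀ := by
      rcases ht₀.lt_or_eq with h | h
      · exact h
      · exfalso; rw [← h] at hft₀; exact absurd hft₀ (ne_of_gt h0)
    have := key t₀ ⟨ht₀pos.le, le_rfl⟩
    rw [gronwallBound_ε0] at this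
    simp [hF] at this
    exact absurd this (ne_of_gt h0)
  intro t ht
  rcases lt_trichotomy (f t) 0 with h | h | h
  · exfalso
    have hc : ContinuousOn f (Icc 0 t) := fun x hx =>
      ((hf x hx.1).continuousAt).continuousWithinAt
    have : (0:ℝ) ∈ Icc (f t) (f 0) := ⟨le_of_lt h, le_of_lt h0⟩
    obtain ⟨z, hz, hfz⟩ := intermediate_value_Icc' ht hc this
    exact hne z hz.1 hfz
  · exact absurd h (hne t ht)
  · exact h


set_option maxHeartbeats 1000000 in
theorem lotka_volterra_superior_competitor
    (a₁ a₂ b₁ b₂ c₁ c₂ : ℝ)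
    (ha₁ : 0 < a₁) (ha₂ : 0 < a₂) (hb₁ : 0 < b₁) (hb₂ : 0 < b₂)
    (hc₁ : 0 < c₁) (hc₂ : 0 < c₂)
    (hsup : max (b₁ / b₂) (c₁ / c₂) < a₁ / a₂)
    (u v : ℝ → ℝ)
    (hu : ∀ t, 0 ≤ t → HasDerivAt u (u t * (a₁ - b₁ * u t - c₁ * v t)) t)
    (hv : ∀ t, 0 ≤ t → HasDerivAt v (v t * (a₂ - b₂ * u t - c₂ * v t)) t)
    (hu0 : 0 < u 0) (hv0 : 0 < v 0) :
    Tendsto u atTop (nhds (a₁ / b₁)) ∧ Tendsto v atTop (nhds 0) := by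
  -- continuity
  have hucont : ∀ t, 0 ≤ t → ContinuousAt u t := fun t ht => (hu t ht).continuousAt
  have hvcont : ∀ t, 0 ≤ t → ContinuousAt v t := fun t ht => (hv t ht).continuousAt
  -- positivity
  have hup : ∀ t, 0 ≤ t → 0 < u t := by
    apply pos_of_pos_init u (fun t => a₁ - b₁ * u t - c₁ * v t) hu _ hu0
    intro t ht
    exact (continuousAt_const.sub ((hucont t ht).const_mul b₁)).sub ((hvcont t ht).const_mul c₁)
  have hvp : ∀ t, 0 ≤ t → 0 < v t := by
    apply pos_of_pos_init v (fun t => a₂ - b₂ * u t - c₂ * v t) hv _ hv0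
    intro t ht
    exact (continuousAt_const.sub ((hucont t ht).const_mul b₂)).sub ((hvcont t ht).const_mul c₂)
  set L := a₁ / b₁ with hL
  have hLpos : 0 < L := div_pos ha₁ hb₁
  have hbL : b₁ * L = a₁ := by rw [hL, mul_div_assoc']; exact mul_div_cancel_left₀ a₁ hb₁.ne'
  -- upper bound on u
  set M := max (u 0) L with hM
  have hMpos : 0 < M := lt_of_lt_of_le hLpos (le_max_right _ _)
  have hub : ∀ t, 0 ≤ t → u t ≤ M := by
    intro t ht
    apply stay_below u (fun t => u t * (a₁ - b₁ * u t - c₁ * v t)) 0 M hu _ 0 t le_rfl ht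
      (le_max_left _ _)
    intro s hs hMs
    have h1 : L < u s := lt_of_le_of_lt (le_max_right _ _) hMs
    have h2 : a₁ - b₁ * u s - c₁ * v s < 0 := by
      have : a₁ < b₁ * u s := by rw [← hbL]; exact (mul_lt_mul_iff_right₀ hb₁).mpr h1
      nlinarith [mul_pos hc₁ (hvp s hs)]
    exact mul_neg_of_pos_of_neg (hup s hs) h2
  -- log derivatives
  have hLu : ∀ t, 0 ≤ t → HasDerivAt (fun s => log (u s))
      (a₁ - b₁ * u t - c₁ * v t) t := by
    intro t ht
    have h := (hu t ht).log (ne_of_gt (hup t ht))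
    rwa [mul_div_cancel_left₀ _ (ne_of_gt (hup t ht))] at h
  have hLv : ∀ t, 0 ≤ t → HasDerivAt (fun s => log (v s))
      (a₂ - b₂ * u t - c₂ * v t) t := by
    intro t ht
    have h := (hv t ht).log (ne_of_gt (hvp t ht))
    rwa [mul_div_cancel_left₀ _ (ne_of_gt (hvp t ht))] at h
  -- choose λ
  have hbb : a₂ / a₁ < b₂ / b₁ := by
    have h1 : b₁ / b₂ < a₁ / a₂ := lt_of_le_of_lt (le_max_left _ _) hsup
    rw [div_lt_div_iff₀ hb₂ ha₂] at h1
    rw [div_lt_div_iff₀ ha₁ hb₁]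
    nlinarith
  have hcc : a₂ / a₁ < c₂ / c₁ := by
    have h1 : c₁ / c₂ < a₁ / a₂ := lt_of_le_of_lt (le_max_right _ _) hsup
    rw [div_lt_div_iff₀ hc₂ ha₂] at h1
    rw [div_lt_div_iff₀ ha₁ hc₁]
    nlinarith
  set l := (a₂ / a₁ + min (b₂ / b₁) (c₂ / c₁)) / 2 with hl
  have hm : a₂ / a₁ < min (b₂ / b₁) (c₂ / c₁) := lt_min hbb hcc
  have hl1 : a₂ / a₁ < l := by rw [hl]; linarith
  have hl2 : l < min (b₂ / b₁) (c₂ / c₁) := by rw [hl]; linarith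
  have hlpos : 0 < l := lt_trans (div_pos ha₂ ha₁) hl1
  have hδ : 0 < l * a₁ - a₂ := by
    have := (div_lt_iff₀ ha₁).mp hl1
    linarith
  have hlb : l * b₁ ≤ b₂ := by
    have h2 : l < b₂ / b₁ := lt_of_lt_of_le hl2 (min_le_left _ _)
    have := (lt_div_iff₀ hb₁).mp h2
    linarith
  have hlc : l * c₁ ≤ c₂ := by
    have h2 : l < c₂ / c₁ := lt_of_lt_of_le hl2 (min_le_right _ _)
    have := (lt_div_iff₀ hc₁).mp h2
    linarith
  set δ := l * a₁ - a₂ with hδdef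
  -- Lyapunov decay
  set W : ℝ → ℝ := fun t => log (v t) - l * log (u t) with hW
  have hWd : ∀ t, 0 ≤ t → HasDerivAt W
      ((a₂ - b₂ * u t - c₂ * v t) - l * (a₁ - b₁ * u t - c₁ * v t)) t := by
    intro t ht
    exact (hLv t ht).sub ((hLu t ht).const_mul l)
  have hWdec : ∀ t, 0 ≤ t → W t ≤ W 0 - δ * t := by
    apply decay_lin W _ δ hWd
    intro t ht
    have h1 : 0 ≤ (b₂ - l * b₁) * u t := mul_nonneg (by linarith) (hup t ht).le
    have h2 : 0 ≤ (c₂ - l * c₁) * v t := mul_nonneg (by linarith) (hvp t ht).le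
    nlinarith
  -- v → 0
  have hlogv : ∀ t, 0 ≤ t → log (v t) ≤ (W 0 + l * log M) - δ * t := by
    intro t ht
    have h1 := hWdec t ht
    have h2 : log (u t) ≤ log M := (log_le_log_iff (hup t ht) hMpos).mpr (hub t ht)
    have h3 : l * log (u t) ≤ l * log M := mul_le_mul_of_nonneg_left h2 hlpos.le
    have h1' : log (v t) - l * log (u t) ≤ W 0 - δ * t := h1
    linarith
  have hvle : ∀ t, 0 ≤ t → v t ≤ exp ((W 0 + l * log M) - δ * t) := by
    intro t ht
    have := exp_le_exp.mpr (hlogv t ht)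
    rwa [exp_log (hvp t ht)] at this
  have hvtend : Tendsto v atTop (nhds 0) := by
    apply squeeze_zero' (f := v) (g := fun t => exp ((W 0 + l * log M) - δ * t))
    · filter_upwards [eventually_ge_atTop (0:ℝ)] with t ht
      exact (hvp t ht).le
    · filter_upwards [eventually_ge_atTop (0:ℝ)] with t ht
      exact hvle t ht
    · have hδt : Tendsto (fun t : ℝ => δ * t) atTop atTop :=
        Tendsto.const_mul_atTop hδ tendsto_id
      have hneg : Tendsto (fun t : ℝ => -(δ * t)) atTop atBot :=
        tendsto_neg_atTop_atBot.comp hδt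
      have h1 : Tendsto (fun t : ℝ => (W 0 + l * log M) - δ * t) atTop atBot := by
        have h2 := tendsto_atBot_add_const_left atTop (W 0 + l * log M) hneg
        exact h2.congr (fun x => by ring)
      exact Real.tendsto_exp_atBot.comp h1
  refine ⟨?_, hvtend⟩
  -- u → L
  rw [Metric.tendsto_atTop]
  intro ε hε
  set η := min (ε / 2) (L / 2) with hη
  have hηpos : 0 < η := lt_min (by linarith) (by linarith)
  have hηε : η < ε := lt_of_le_of_lt (min_le_left _ _) (by linarith)
  have hηL : η < L := lt_of_le_of_lt (min_le_right _ _) (by linarith)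
  set ε' := b₁ * η / (2 * c₁) with hε'
  have hε'pos : 0 < ε' := div_pos (mul_pos hb₁ hηpos) (by linarith)
  have hcε' : c₁ * ε' = b₁ * η / 2 := by rw [hε']; field_simp
  -- eventually v small
  obtain ⟨T₀, hT₀⟩ := eventually_atTop.mp (hvtend.eventually (gt_mem_nhds hε'pos))
  set T := max T₀ 0 with hT
  have hTnn : (0:ℝ) ≤ T := le_max_right _ _
  -- upper bound : eventually u ≤ L + η
  have hLη : 0 < L + η := by linarith
  obtain ⟨t₂, ht₂0, ht₂⟩ := must_reach_below (fun s => log (u s))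
      (fun t => a₁ - b₁ * u t - c₁ * v t) 0 (log (L + η)) (b₁ * η)
      (mul_pos hb₁ hηpos) hLu
      (by
        intro t ht hgt
        have hut : L + η < u t := (log_lt_log_iff hLη (hup t ht)).mp hgt
        have h5 : a₁ < b₁ * u t - b₁ * η := by nlinarith
        show a₁ - b₁ * u t - c₁ * v t ≤ -(b₁ * η)
        nlinarith [mul_nonneg hc₁.le (hvp t ht).le])
  have hupper : ∀ t, t₂ ≤ t → u t ≤ L + η := by
    intro t ht
    have := stay_below (fun s => log (u s)) (fun t => a₁ - b₁ * u t - c₁ * v t)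
      0 (log (L + η)) hLu
      (by
        intro s hs hgt
        have hus : L + η < u s := (log_lt_log_iff hLη (hup s hs)).mp hgt
        show a₁ - b₁ * u s - c₁ * v s < 0
        nlinarith [mul_nonneg hc₁.le (hvp s hs).le])
      t₂ t ht₂0 ht ht₂
    exact (log_le_log_iff (hup t (ht₂0.trans ht)) hLη).mp this
  -- lower bound : eventually u ≥ L - η
  have hLη' : 0 < L - η := by linarith
  obtain ⟨t₃, ht₃T, ht₃⟩ := must_reach (fun s => log (u s))
      (fun t => a₁ - b₁ * u t - c₁ * v t) T (log (L - η)) (b₁ * η / 2)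
      (by positivity) (fun t ht => hLu t (hTnn.trans ht))
      (by
        intro t ht hlt
        have htnn : 0 ≤ t := hTnn.trans ht
        have hut : u t < L - η := (log_lt_log_iff (hup t htnn) hLη').mp hlt
        have hvs : v t < ε' := hT₀ t (le_trans (le_max_left _ _) ht)
        have hc : c₁ * v t < b₁ * η / 2 := by
          rw [← hcε']
          exact (mul_lt_mul_iff_right₀ hc₁).mpr hvs
        show b₁ * η / 2 ≤ a₁ - b₁ * u t - c₁ * v t
        nlinarith)
  have hlower : ∀ t, t₃ ≤ t → L - η ≤ u t := by
    intro t ht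
    have hres := stay_above (fun s => log (u s)) (fun t => a₁ - b₁ * u t - c₁ * v t)
      T (log (L - η)) (fun s hs => hLu s (hTnn.trans hs))
      (by
        intro s hs hlt
        have hsnn : 0 ≤ s := hTnn.trans hs
        have hus : u s < L - η := (log_lt_log_iff (hup s hsnn) hLη').mp hlt
        have hvs : v s < ε' := hT₀ s (le_trans (le_max_left _ _) hs)
        have hc : c₁ * v s < b₁ * η / 2 := by
          rw [← hcε']
          exact (mul_lt_mul_iff_right₀ hc₁).mpr hvs
        show 0 < a₁ - b₁ * u s - c₁ * v s
        nlinarith)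
      t₃ t ht₃T ht ht₃
    exact (log_le_log_iff hLη' (hup t (hTnn.trans (ht₃T.trans ht)))).mp hres
  refine ⟨max t₂ t₃, ?_⟩
  intro t ht
  have h1 := hupper t (le_trans (le_max_left _ _) ht)
  have h2 := hlower t (le_trans (le_max_right _ _) ht)
  rw [Real.dist_eq]
  have : |u t - L| ≤ η := abs_le.mpr ⟨by linarith, by linarith⟩
  linarith
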